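/- Let n ≥ 2 be an integer, set β = β̂_n and a_n = (n² − β̂_n)/(2n). Then the set of 2π-periodic C² solutions (x,y): ℝ → ℝ² of the system (E_{β̂_n}) is exactly the real linear span of the two solutions t ↦ (a_n sin(nt), cos(nt)) and t ↦ (a_n cos(nt), −sin(nt)). -/

import Mathlib

lemma aux_exp_ode (p : ℝ → ℝ) (c : ℝ) (hp : ∀ t, HasDerivAt p (c * p t) t) (t : ℝ) :
    p t = p 0 * Real.exp (c * t) := by
  have h1 : ∀ s, HasDerivAt (fun s => p s * Real.exp (-c * s)) 0 s := by
    intro s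
    have h := (hp s).mul (((hasDerivAt_id s).const_mul (-c)).exp)
    refine h.congr_deriv (Eq.symm ?_)
    ring
  have hc := is_const_of_deriv_eq_zero (fun s => (h1 s).differentiableAt)
      (fun s => (h1 s).deriv) t 0
  simp only [neg_mul, mul_zero, neg_zero, Real.exp_zero, mul_one] at hc
  have := congrArg (· * Real.exp (c * t)) hc
  simp only [mul_assoc, ← Real.exp_add] at this
  simpa using this

lemma aux_harmonic (z w : ℝ → ℝ) (ω : ℝ) (hω : ω ≠ 0) (hz : ∀ t, HasDerivAt z (w t) t)
    (hw : ∀ t, HasDerivAt w (-(ω^2) * z t) t) (h0 : z 0 = 0) (h1 : w 0 = 0) (t : ℝ) :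
    z t = 0 := by
  have hE : ∀ s, HasDerivAt (fun s => w s ^ 2 + ω^2 * z s ^ 2) 0 s := by
    intro s
    have h := ((hw s).pow 2).add (((hz s).pow 2).const_mul (ω^2))
    refine h.congr_deriv (Eq.symm ?_)
    simp only [Nat.cast_ofNat, pow_one]
    ring
  have hc := is_const_of_deriv_eq_zero (fun s => (hE s).differentiableAt)
      (fun s => (hE s).deriv) t 0
  rw [h0, h1] at hc
  have hω2 : 0 < ω^2 := by positivity
  have h3 : ω^2 * (z t)^2 = 0 := by
    nlinarith [sq_nonneg (w t), sq_nonneg (z t), mul_nonneg hω2.le (sq_nonneg (z t))]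
  have h4 : (z t)^2 = 0 := by
    rcases mul_eq_zero.mp h3 with h | h
    · exact absurd h (ne_of_gt hω2)
    · exact h
  exact pow_eq_zero_iff (by norm_num) |>.mp h4

/-- At `β = β̂_n` (`n ≥ 2`), the `2π`-periodic solutions of the Euler system at `e = 0` are
exactly the span of `t ↦ (aₙ sin nt, cos nt)` and `t ↦ (aₙ cos nt, −sin nt)`,
with `aₙ = (n² − β̂_n)/(2n)`. -/
theorem euler_periodic_kernel (n : ℕ) (hn : 2 ≤ n) (β a : ℝ)
    (hβ : β = ((n : ℝ) ^ 2 - 3 + Real.sqrt (9 * (n : ℝ) ^ 4 - 14 * (n : ℝ) ^ 2 + 9)) / 4)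
    (ha : a = ((n : ℝ) ^ 2 - β) / (2 * (n : ℝ))) :
    {f : ℝ → ℝ × ℝ | ContDiff ℝ 2 f ∧ (∀ t, f (t + 2 * Real.pi) = f t) ∧
      ∀ t, (deriv (deriv f) t).1 = (2 * β + 3) * (f t).1 + 2 * (deriv f t).2 ∧
           (deriv (deriv f) t).2 = -β * (f t).2 - 2 * (deriv f t).1}
    = ↑(Submodule.span ℝ
        {(fun t : ℝ => (a * Real.sin ((n : ℝ) * t), Real.cos ((n : ℝ) * t))),
         (fun t : ℝ => (a * Real.cos ((n : ℝ) * t), -Real.sin ((n : ℝ) * t)))}) := by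
  -- algebraic preliminaries
  have hn2 : (2:ℝ) ≤ (n:ℝ) := by exact_mod_cast hn
  have hnpos : (0:ℝ) < (n:ℝ) := by linarith
  have hnne : (n:ℝ) ≠ 0 := ne_of_gt hnpos
  have hD : (0:ℝ) ≤ 9*(n:ℝ)^4 - 14*(n:ℝ)^2 + 9 := by
    nlinarith [sq_nonneg ((n:ℝ)^2-1), sq_nonneg (n:ℝ)]
  have hs2 : (Real.sqrt (9*(n:ℝ)^4 - 14*(n:ℝ)^2 + 9))^2 = 9*(n:ℝ)^4 - 14*(n:ℝ)^2 + 9 :=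
    Real.sq_sqrt hD
  have hs0 : 0 ≤ Real.sqrt (9*(n:ℝ)^4 - 14*(n:ℝ)^2 + 9) := Real.sqrt_nonneg _
  have hquad : 2*β^2 + (3 - (n:ℝ)^2)*β + (n:ℝ)^2 - (n:ℝ)^4 = 0 := by
    rw [hβ]; linear_combination (1/8 : ℝ) * hs2
  have hβpos : 0 < β := by rw [hβ]; nlinarith
  have hβlt : β < (n:ℝ)^2 := by rw [hβ]; nlinarith [hs2, hs0, hn2]
  have han : a * (2*(n:ℝ)) = (n:ℝ)^2 - β := by rw [ha]; field_simp
  have hkey : a * ((n:ℝ)^2 + 2*β + 3) = 2*(n:ℝ) := by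
    rw [ha]; field_simp; linear_combination (-1:ℝ) * hquad
  have hKpos : 0 < (n:ℝ)^2 + β - 1 := by nlinarith
  ext f
  simp only [Set.mem_setOf_eq, SetLike.mem_coe, Submodule.mem_span_pair]
  constructor
  · rintro ⟨hf, hper, hode⟩
    set N : ℝ := (n:ℝ) with hN
    -- derivative infrastructure
    have hfd : Differentiable ℝ f := hf.differentiable (by norm_num)
    have hdfd : Differentiable ℝ (deriv f) := by
      have h2 : ContDiff ℝ ((1:ℕ)+1) f := by norm_num at hf ⊢; exact hf
      exact ((contDiff_succ_iff_deriv.mp h2).2.2).differentiable (by norm_num)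
    set x : ℝ → ℝ := fun t => (f t).1 with hxdef
    set y : ℝ → ℝ := fun t => (f t).2 with hydef
    set x1 : ℝ → ℝ := fun t => (deriv f t).1 with hx1def
    set y1 : ℝ → ℝ := fun t => (deriv f t).2 with hy1def
    have hx : ∀ t, HasDerivAt x (x1 t) t := fun t => ((hfd t).hasDerivAt).fst
    have hy : ∀ t, HasDerivAt y (y1 t) t := fun t => ((hfd t).hasDerivAt).snd
    have hx1 : ∀ t, HasDerivAt x1 ((2*β+3) * x t + 2 * y1 t) t := by
      intro t
      have h : HasDerivAt x1 ((deriv (deriv f) t).1) t := ((hdfd t).hasDerivAt).fst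
      rwa [(hode t).1] at h
    have hy1 : ∀ t, HasDerivAt y1 (-β * y t - 2 * x1 t) t := by
      intro t
      have h : HasDerivAt y1 ((deriv (deriv f) t).2) t := ((hdfd t).hasDerivAt).snd
      rwa [(hode t).2] at h
    -- periodicity
    have hdper : ∀ t, deriv f (t + 2*Real.pi) = deriv f t := by
      intro t
      rw [← deriv_comp_add_const]
      congr 1
      funext s
      exact hper s
    -- u := (N²-β) y - 2 x1 satisfies u'' = K u with K = N²+β-1 > 0
    set K : ℝ := N^2 + β - 1 with hKdef
    set u : ℝ → ℝ := fun t => (N^2 - β) * y t - 2 * x1 t with hudef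
    set u1 : ℝ → ℝ := fun t => (N^2 - β) * y1 t - 2 * ((2*β+3) * x t + 2 * y1 t) with hu1def
    have hu : ∀ t, HasDerivAt u (u1 t) t :=
      fun t => ((hy t).const_mul _).sub ((hx1 t).const_mul 2)
    have hu1 : ∀ t, HasDerivAt u1 (K * u t) t := by
      intro t
      have h := ((hy1 t).const_mul (N^2 - β)).sub
        ((((hx t).const_mul (2*β+3)).add ((hy1 t).const_mul 2)).const_mul 2)
      refine h.congr_deriv (Eq.symm ?_)
      simp only [hudef, hKdef]
      linear_combination (-(y t)) * hquad
    have huper : ∀ t, u (t + 2*Real.pi) = u t := by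
      intro t
      simp only [hudef, hydef, hx1def, hper t, hdper t]
    have hu1per : ∀ t, u1 (t + 2*Real.pi) = u1 t := by
      intro t
      simp only [hu1def, hydef, hxdef, hy1def, hper t, hdper t]
    set r : ℝ := Real.sqrt K with hrdef
    have hrpos : 0 < r := Real.sqrt_pos.mpr hKpos
    have hr2 : r^2 = K := Real.sq_sqrt hKpos.le
    -- p := u1 - r u  and  q := u1 + r u decay/grow exponentially; periodicity kills them
    have hp : ∀ t, HasDerivAt (fun t => u1 t - r * u t) (-r * (u1 t - r * u t)) t := by
      intro t
      have h := (hu1 t).sub ((hu t).const_mul r)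
      refine h.congr_deriv (Eq.symm ?_)
      linear_combination (u t) * hr2
    have hq : ∀ t, HasDerivAt (fun t => u1 t + r * u t) (r * (u1 t + r * u t)) t := by
      intro t
      have h := (hu1 t).add ((hu t).const_mul r)
      refine h.congr_deriv (Eq.symm ?_)
      linear_combination (u t) * hr2
    have hexp_ne : ∀ c : ℝ, c ≠ 0 → Real.exp (c * (2*Real.pi)) ≠ 1 := by
      intro c hc h
      rw [show (1:ℝ) = Real.exp 0 by simp] at h
      have h0 := Real.exp_eq_exp.mp h
      have h2π : (2:ℝ)*Real.pi ≠ 0 := by positivity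
      rcases mul_eq_zero.mp h0 with h' | h'
      · exact hc h'
      · exact h2π h'
    have hpz : ∀ t, u1 t - r * u t = 0 := by
      intro t
      have hform := aux_exp_ode _ _ hp
      have hper0 : u1 (0 + 2*Real.pi) - r * u (0 + 2*Real.pi) = u1 0 - r * u 0 := by
        rw [huper, hu1per]
      have h2 := hform (0 + 2*Real.pi)
      rw [hper0] at h2
      have h0 : u1 0 - r * u 0 = 0 := by
        by_contra hne
        have h3 : (u1 0 - r * u 0) * (Real.exp (-r * (0 + 2*Real.pi)) - 1) = 0 := by
          linear_combination -h2
        rcases mul_eq_zero.mp h3 with h' | h'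
        · exact hne h'
        · have h4 := sub_eq_zero.mp h'
          rw [show (-r * (0 + 2*Real.pi)) = (-r) * (2*Real.pi) by ring] at h4
          exact hexp_ne (-r) (by linarith) h4
      rw [hform t, h0, zero_mul]
    have hqz : ∀ t, u1 t + r * u t = 0 := by
      intro t
      have hform := aux_exp_ode _ _ hq
      have hper0 : u1 (0 + 2*Real.pi) + r * u (0 + 2*Real.pi) = u1 0 + r * u 0 := by
        rw [huper, hu1per]
      have h2 := hform (0 + 2*Real.pi)
      rw [hper0] at h2
      have h0 : u1 0 + r * u 0 = 0 := by
        by_contra hne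
        have h3 : (u1 0 + r * u 0) * (Real.exp (r * (0 + 2*Real.pi)) - 1) = 0 := by
          linear_combination -h2
        rcases mul_eq_zero.mp h3 with h' | h'
        · exact hne h'
        · have h4 := sub_eq_zero.mp h'
          rw [show (r * (0 + 2*Real.pi)) = r * (2*Real.pi) by ring] at h4
          exact hexp_ne r (by linarith) h4
      rw [hform t, h0, zero_mul]
    have huz : ∀ t, u t = 0 := by
      intro t
      have h1 := hpz t
      have h2 := hqz t
      have h3 : r * u t = 0 := by linarith
      rcases mul_eq_zero.mp h3 with h' | h'
      · exact absurd h' (ne_of_gt hrpos)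
      · exact h'
    -- x1 = a N y
    have hx1y : ∀ t, x1 t = a * N * y t := by
      intro t
      have h := huz t
      simp only [hudef] at h
      linear_combination (-(1:ℝ)/2) * h - (y t/2) * han
    -- y'' = -N² y
    have hy2 : ∀ t, HasDerivAt y1 (-(N^2) * y t) t := by
      intro t
      have h := hy1 t
      convert h using 1
      rw [hx1y t]
      linear_combination (y t) * han
    -- identify y with sinusoid
    obtain ⟨c, hcdef⟩ : ∃ c : ℝ, y 0 = c := ⟨_, rfl⟩
    obtain ⟨d, hddef⟩ : ∃ d : ℝ, -(y1 0) / N = d := ⟨_, rfl⟩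
    have hY : ∀ t, HasDerivAt (fun t => c * Real.cos (N*t) - d * Real.sin (N*t))
        (-(c*N) * Real.sin (N*t) - d*N*Real.cos (N*t)) t := by
      intro t
      have hs := ((hasDerivAt_id t).const_mul N).sin
      have hc' := ((hasDerivAt_id t).const_mul N).cos
      have h := (hc'.const_mul c).sub (hs.const_mul d)
      refine h.congr_deriv (Eq.symm ?_)
      simp only [id_eq]
      ring
    have hY1 : ∀ t, HasDerivAt (fun t => -(c*N) * Real.sin (N*t) - d*N*Real.cos (N*t))
        (-(N^2) * (c * Real.cos (N*t) - d * Real.sin (N*t))) t := by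
      intro t
      have hs := ((hasDerivAt_id t).const_mul N).sin
      have hc' := ((hasDerivAt_id t).const_mul N).cos
      have h := (hs.const_mul (-(c*N))).sub (hc'.const_mul (d*N))
      refine h.congr_deriv (Eq.symm ?_)
      simp only [id_eq]
      ring
    have hz : ∀ t, y t - (c * Real.cos (N*t) - d * Real.sin (N*t)) = 0 := by
      apply aux_harmonic (fun t => y t - (c * Real.cos (N*t) - d * Real.sin (N*t)))
        (fun t => y1 t - (-(c*N) * Real.sin (N*t) - d*N*Real.cos (N*t))) N hnne
      · exact fun t => (hy t).sub (hY t)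
      · intro t
        have h := (hy2 t).sub (hY1 t)
        refine h.congr_deriv (Eq.symm ?_)
        ring
      · simp [← hcdef]
      · simp only [mul_zero, Real.sin_zero, Real.cos_zero]
        rw [← hddef]
        field_simp
        ring
    have hyeq : ∀ t, y t = c * Real.cos (N*t) - d * Real.sin (N*t) := by
      intro t
      have := hz t
      linarith
    have hy1eq : ∀ t, y1 t = -(c*N) * Real.sin (N*t) - d*N*Real.cos (N*t) := by
      intro t
      have hfun : y = fun t => c * Real.cos (N*t) - d * Real.sin (N*t) := funext hyeq
      have h1 : HasDerivAt y (-(c*N) * Real.sin (N*t) - d*N*Real.cos (N*t)) t := by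
        rw [hfun]; exact hY t
      exact (hy t).unique h1
    -- identify x
    have hxeq : ∀ t, x t = c * (a * Real.sin (N*t)) + d * (a * Real.cos (N*t)) := by
      intro t
      -- derivative of x1 two ways
      have hfun : x1 = fun t => a * N * y t := funext hx1y
      have h1 : HasDerivAt x1 (a * N * y1 t) t := by
        rw [hfun]; exact (hy t).const_mul _
      have h2 := (hx1 t).unique h1
      -- (2β+3) x t = (a N - 2) y1 t
      have h3 : (2*β+3) * x t = (a*N - 2) * y1 t := by linarith [h2]
      have hb : (2*β+3) ≠ 0 := by positivity
      have h4 : (2*β+3) * x t = (2*β+3) * (c * (a * Real.sin (N*t)) + d * (a * Real.cos (N*t))) := by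
        rw [h3, hy1eq t]
        linear_combination (-(c * Real.sin (N*t)) - d * Real.cos (N*t)) * hkey
      exact mul_left_cancel₀ hb h4
    refine ⟨c, d, funext fun t => ?_⟩
    have : f t = (x t, y t) := rfl
    rw [Pi.add_apply, Pi.smul_apply, Pi.smul_apply, this, hxeq t, hyeq t]
    simp only [Prod.smul_mk, smul_eq_mul, Prod.mk_add_mk, Prod.mk.injEq]
    exact ⟨trivial, by ring⟩
  · rintro ⟨c, d, rfl⟩
    set N : ℝ := (n:ℝ) with hN
    have hg : (c • (fun t : ℝ => (a * Real.sin (N * t), Real.cos (N * t)))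
        + d • (fun t : ℝ => (a * Real.cos (N * t), -Real.sin (N * t))))
        = fun t : ℝ => (c*a*Real.sin (N*t) + d*a*Real.cos (N*t),
            c*Real.cos (N*t) - d*Real.sin (N*t)) := by
      funext t
      simp only [Pi.add_apply, Pi.smul_apply, Prod.smul_mk, smul_eq_mul, Prod.mk_add_mk,
        Prod.mk.injEq]
      constructor <;> ring
    rw [hg]
    refine ⟨?_, ?_, ?_⟩
    · have hsin : ContDiff ℝ 2 (fun t : ℝ => Real.sin (N*t)) :=
        (Real.contDiff_sin.of_le le_top).comp (contDiff_const.mul contDiff_id)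
      have hcos : ContDiff ℝ 2 (fun t : ℝ => Real.cos (N*t)) :=
        (Real.contDiff_cos.of_le le_top).comp (contDiff_const.mul contDiff_id)
      exact (((contDiff_const.mul hsin).add (contDiff_const.mul hcos))).prodMk
        (((contDiff_const.mul hcos)).sub ((contDiff_const.mul hsin)))
    · intro t
      have harg : N*(t + 2*Real.pi) = N*t + (n:ℤ)*(2*Real.pi) := by push_cast; ring
      simp only [harg, Real.sin_add_int_mul_two_pi, Real.cos_add_int_mul_two_pi]
    · have hsin : ∀ t : ℝ, HasDerivAt (fun t : ℝ => Real.sin (N*t)) (N * Real.cos (N*t)) t := by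
        intro t
        have h := ((hasDerivAt_id t).const_mul N).sin
        simpa [mul_comm] using h
      have hcos : ∀ t : ℝ, HasDerivAt (fun t : ℝ => Real.cos (N*t)) (-(N * Real.sin (N*t))) t := by
        intro t
        have h := ((hasDerivAt_id t).const_mul N).cos
        simpa [mul_comm] using h
      have hG : ∀ t : ℝ, HasDerivAt (fun t : ℝ => (c*a*Real.sin (N*t) + d*a*Real.cos (N*t),
          c*Real.cos (N*t) - d*Real.sin (N*t)))
          ((c*a*N*Real.cos (N*t) - d*a*N*Real.sin (N*t),
            -(c*N)*Real.sin (N*t) - d*N*Real.cos (N*t))) t := by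
        intro t
        apply HasDerivAt.prodMk
        · have h := (((hsin t).const_mul (c*a))).add ((hcos t).const_mul (d*a))
          refine h.congr_deriv (Eq.symm ?_); ring
        · have h := (((hcos t).const_mul c)).sub ((hsin t).const_mul d)
          refine h.congr_deriv (Eq.symm ?_); ring
      have hG1 : ∀ t : ℝ, HasDerivAt (fun t : ℝ => (c*a*N*Real.cos (N*t) - d*a*N*Real.sin (N*t),
          -(c*N)*Real.sin (N*t) - d*N*Real.cos (N*t)))
          ((-(c*a*N^2)*Real.sin (N*t) - d*a*N^2*Real.cos (N*t),
            -(c*N^2)*Real.cos (N*t) + d*N^2*Real.sin (N*t))) t := by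
        intro t
        apply HasDerivAt.prodMk
        · have h := (((hcos t).const_mul (c*a*N))).sub ((hsin t).const_mul (d*a*N))
          refine h.congr_deriv (Eq.symm ?_); ring
        · have h := (((hsin t).const_mul (-(c*N)))).sub ((hcos t).const_mul (d*N))
          refine h.congr_deriv (Eq.symm ?_); ring
      have hd1 : deriv (fun t : ℝ => (c*a*Real.sin (N*t) + d*a*Real.cos (N*t),
          c*Real.cos (N*t) - d*Real.sin (N*t)))
          = fun t => (c*a*N*Real.cos (N*t) - d*a*N*Real.sin (N*t),
            -(c*N)*Real.sin (N*t) - d*N*Real.cos (N*t)) :=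
        funext fun t => (hG t).deriv
      intro t
      rw [hd1]
      rw [funext fun t => (hG1 t).deriv]
      constructor
      · show -(c*a*N^2)*Real.sin (N*t) - d*a*N^2*Real.cos (N*t)
          = (2*β+3) * (c*a*Real.sin (N*t) + d*a*Real.cos (N*t))
            + 2 * (-(c*N)*Real.sin (N*t) - d*N*Real.cos (N*t))
        linear_combination (-(c*Real.sin (N*t)) - d*Real.cos (N*t)) * hkey
      · show -(c*N^2)*Real.cos (N*t) + d*N^2*Real.sin (N*t)
          = -β * (c*Real.cos (N*t) - d*Real.sin (N*t))
            - 2 * (c*a*N*Real.cos (N*t) - d*a*N*Real.sin (N*t))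
        linear_combination (c*Real.cos (N*t) - d*Real.sin (N*t)) * han
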